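/- Under the assumptions of the descent theorem with the stronger step-size bound α ≤ 1/(Mγ² + L(1+ν²)), each SPGD step satisfies E_k[F(x_{k+1})] − F(x_k) ≤ −(α/2)‖R(x_k)‖². -/

import Mathlib

open MeasureTheory
open scoped RealInnerProductSpace

section Aux
variable {E : Type*} [NormedAddCommGroup E] [InnerProductSpace ℝ E] [CompleteSpace E]

lemma descent_lemma {F : E → ℝ} (hF : ContDiff ℝ 1 F) {L : ℝ}
    (hlip : ∀ a b, ‖gradient F a - gradient F b‖ ≤ L * ‖a - b‖) (x y : E) :
    F y ≤ F x + ⟪gradient F x, y - x⟫ + L / 2 * ‖y - x‖ ^ 2 := by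
  set v := y - x with hv
  set g' : ℝ → ℝ := fun t => ⟪gradient F (x + t • v), v⟫ with hg'
  have hdiff : ∀ z, DifferentiableAt ℝ F z := fun z =>
    (hF.differentiable one_ne_zero).differentiableAt
  have key : ∀ t : ℝ, HasDerivAt (fun t => F (x + t • v)) (g' t) t := by
    intro t
    have h1 : HasDerivAt (fun t : ℝ => x + t • v) v t := by
      simpa using ((hasDerivAt_id t).smul_const v).const_add x
    have h2 : HasFDerivAt F (InnerProductSpace.toDual ℝ E (gradient F (x + t • v)))
        (x + t • v) := (hdiff _).hasGradientAt.hasFDerivAt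
    simpa [g', Function.comp_def] using h2.comp_hasDerivAt t h1
  have hgradc : Continuous (gradient F) := by
    have h := hF.continuous_fderiv one_ne_zero
    have : gradient F = fun z => (InnerProductSpace.toDual ℝ E).symm (fderiv ℝ F z) := by
      funext z; rw [gradient]
    rw [this]
    exact (InnerProductSpace.toDual ℝ E).symm.continuous.comp h
  have hcontg' : Continuous g' :=
    (Continuous.inner (hgradc.comp (by continuity)) continuous_const)
  have ftc : F (x + (1:ℝ) • v) - F (x + (0:ℝ) • v) = ∫ t in (0:ℝ)..1, g' t := by
    rw [intervalIntegral.integral_eq_sub_of_hasDerivAt (fun t _ => key t)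
      (hcontg'.intervalIntegrable 0 1)]
  have hb : ∀ t ∈ Set.Icc (0:ℝ) 1, g' t ≤ g' 0 + L * ‖v‖ ^ 2 * t := by
    intro t ht
    have h1 : g' t - g' 0 = ⟪gradient F (x + t • v) - gradient F (x + (0:ℝ) • v), v⟫ := by
      simp [g', inner_sub_left]
    have h2 : ⟪gradient F (x + t • v) - gradient F (x + (0:ℝ) • v), v⟫ ≤
        ‖gradient F (x + t • v) - gradient F (x + (0:ℝ) • v)‖ * ‖v‖ :=
      real_inner_le_norm _ _
    have h3 : ‖gradient F (x + t • v) - gradient F (x + (0:ℝ) • v)‖ ≤ L * (t * ‖v‖) := by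
      have := hlip (x + t • v) (x + (0:ℝ) • v)
      have he : ‖(x + t • v) - (x + (0:ℝ) • v)‖ = t * ‖v‖ := by
        simp [norm_smul, abs_of_nonneg ht.1]
      rw [he] at this; exact this
    nlinarith [norm_nonneg v, mul_le_mul_of_nonneg_right h3 (norm_nonneg v)]
  have hint : ∫ t in (0:ℝ)..1, g' t ≤ ∫ t in (0:ℝ)..1, (g' 0 + L * ‖v‖ ^ 2 * t) := by
    apply intervalIntegral.integral_mono_on zero_le_one
      (hcontg'.intervalIntegrable 0 1)
      ((continuous_const.add (continuous_const.mul continuous_id)).intervalIntegrable 0 1)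
    exact hb
  have hval : ∫ t in (0:ℝ)..1, (g' 0 + L * ‖v‖ ^ 2 * t) = g' 0 + L * ‖v‖ ^ 2 / 2 := by
    rw [intervalIntegral.integral_add (g := fun t => L * ‖v‖ ^ 2 * t) (intervalIntegrable_const)
      ((continuous_const.mul continuous_id').intervalIntegrable 0 1),
      intervalIntegral.integral_const_mul, integral_id]
    simp; ring
  have hg'0 : g' 0 = ⟪gradient F x, v⟫ := by simp [g']
  have : F y - F x ≤ g' 0 + L * ‖v‖ ^ 2 / 2 := by
    have hxy : F (x + (1:ℝ) • v) = F y := by simp [hv]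
    have hx0 : F (x + (0:ℝ) • v) = F x := by simp
    rw [hxy, hx0] at ftc
    linarith [hint, hval.le, hval.ge, ftc.le, ftc.ge]
  rw [hg'0] at this; linarith

omit [CompleteSpace E] in
lemma proj_vi {C : Set E} (hconv : Convex ℝ C) {P : E → E} (hmem : ∀ y, P y ∈ C)
    (hmin : ∀ y, ∀ z ∈ C, ‖y - P y‖ ≤ ‖y - z‖) (y : E) {z : E} (hz : z ∈ C) :
    ⟪y - P y, z - P y⟫ ≤ 0 := by
  have hne : C.Nonempty := ⟨P y, hmem y⟩
  haveI := hne.to_subtype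
  have heq : ‖y - P y‖ = ⨅ w : C, ‖y - (w : E)‖ := by
    apply le_antisymm
    · exact le_ciInf fun w => hmin y w w.2
    · exact ciInf_le ⟨0, by rintro b ⟨w, rfl⟩; positivity⟩ (⟨P y, hmem y⟩ : C)
  exact (norm_eq_iInf_iff_real_inner_le_zero hconv (hmem y)).mp heq z hz

end Aux

set_option maxHeartbeats 1000000 in
/-- Under the descent theorem's conditions with the stronger step-size bound
`α ≤ 1/(Mγ² + L(1+ν²))`, each SPGD step satisfies
`E[F(x₊)] − F x ≤ −(α/2)‖R x‖²`. -/
theorem stmt_10 {n : ℕ} {Ω : Type*} [MeasurableSpace Ω]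
    (μ : Measure Ω) [IsProbabilityMeasure μ]
    (F : EuclideanSpace ℝ (Fin n) → ℝ) (hF_diff : ContDiff ℝ 1 F)
    (L : ℝ) (hL : 0 < L)
    (hF_smooth : ∀ x y, ‖gradient F x - gradient F y‖ ≤ L * ‖x - y‖)
    (C : Set (EuclideanSpace ℝ (Fin n)))
    (hC_ne : C.Nonempty) (hC_closed : IsClosed C) (hC_convex : Convex ℝ C)
    (P : EuclideanSpace ℝ (Fin n) → EuclideanSpace ℝ (Fin n))
    (hP_mem : ∀ y, P y ∈ C)
    (hP_min : ∀ y, ∀ z ∈ C, ‖y - P y‖ ≤ ‖y - z‖)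
    (α : ℝ) (hα : 0 < α)
    (x : EuclideanSpace ℝ (Fin n)) (hx : x ∈ C)
    -- the random subsampled projected-gradient step `x₊ = Q_S(x)`
    (Qs : Ω → EuclideanSpace ℝ (Fin n))
    (hQs_mem : ∀ ω, Qs ω ∈ C)
    (hQs_int : Integrable Qs μ)
    (hFQs_int : Integrable (fun ω => F (Qs ω)) μ)
    (hRs_int : Integrable (fun ω => ‖α⁻¹ • (x - Qs ω)‖ ^ 2) μ)
    -- gradient bound on an open set containing the iterates
    (M : ℝ) (hM : 0 < M) (U : Set (EuclideanSpace ℝ (Fin n))) (hU : IsOpen U)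
    (hxU : x ∈ U) (hQsU : ∀ ω, Qs ω ∈ U)
    (hgrad_bdd : ∀ y ∈ U, ‖gradient F y‖ ≤ M)
    (ν γ : ℝ) (hν : 0 < ν) (hγ : 0 < γ)
    (hnorm : ∫ ω, ‖α⁻¹ • (x - Qs ω)‖ ^ 2 ∂μ ≤
      (1 + ν ^ 2) * ‖α⁻¹ • (x - P (x - α • gradient F x))‖ ^ 2)
    (hbias : ‖∫ ω, (Qs ω - P (x - α • gradient F x)) ∂μ‖ ≤
      γ ^ 2 / 2 * ‖P (x - α • gradient F x) - x‖ ^ 2)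
    (hstep : α ≤ 1 / (M * γ ^ 2 + L * (1 + ν ^ 2))) :
    (∫ ω, F (Qs ω) ∂μ) - F x ≤
      -(α / 2) * ‖α⁻¹ • (x - P (x - α • gradient F x))‖ ^ 2 := by
  set g := gradient F x with hgdef
  set Q := P (x - α • g) with hQdef
  set s := ‖x - Q‖ ^ 2 with hsdef
  have hs : 0 ≤ s := by positivity
  -- scaled norms
  have hsmul : ∀ w : EuclideanSpace ℝ (Fin n), ‖α⁻¹ • w‖ ^ 2 = α⁻¹ ^ 2 * ‖w‖ ^ 2 := by
    intro w
    rw [norm_smul, Real.norm_eq_abs, abs_of_pos (inv_pos.mpr hα)]; ring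
  -- pointwise descent
  have h1 : ∀ ω, F (Qs ω) ≤ F x + ⟪g, Qs ω - x⟫ + L / 2 * ‖Qs ω - x‖ ^ 2 :=
    fun ω => descent_lemma hF_diff hF_smooth x (Qs ω)
  -- integrability pieces
  have hi1 : Integrable (fun ω => ⟪g, Qs ω - x⟫) μ :=
    (hQs_int.sub (integrable_const x)).const_inner g
  have hfun : (fun ω => ‖Qs ω - x‖ ^ 2) = fun ω => α ^ 2 * ‖α⁻¹ • (x - Qs ω)‖ ^ 2 := by
    funext ω
    rw [hsmul, norm_sub_rev]
    field_simp
  have hi2 : Integrable (fun ω => ‖Qs ω - x‖ ^ 2) μ := by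
    rw [hfun]; exact hRs_int.const_mul _
  -- integrate the descent inequality
  have hiA : Integrable (fun ω => F x + ⟪g, Qs ω - x⟫) μ :=
    (integrable_const (F x)).add hi1
  have hiB : Integrable (fun ω => L / 2 * ‖Qs ω - x‖ ^ 2) μ := hi2.const_mul _
  have hiC : Integrable (fun ω => Qs ω - x) μ := hQs_int.sub (integrable_const x)
  have h2 : (∫ ω, F (Qs ω) ∂μ) ≤
      ∫ ω, (F x + ⟪g, Qs ω - x⟫ + L / 2 * ‖Qs ω - x‖ ^ 2) ∂μ :=
    integral_mono hFQs_int (hiA.add hiB) h1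
  have h3 : ∫ ω, (F x + ⟪g, Qs ω - x⟫ + L / 2 * ‖Qs ω - x‖ ^ 2) ∂μ =
      F x + ⟪g, (∫ ω, Qs ω ∂μ) - x⟫ + L / 2 * ∫ ω, ‖Qs ω - x‖ ^ 2 ∂μ := by
    rw [integral_add hiA hiB,
      integral_add (integrable_const (F x)) hi1, integral_const_mul,
      integral_inner hiC g]
    have : ∫ ω, (Qs ω - x) ∂μ = (∫ ω, Qs ω ∂μ) - x := by
      rw [integral_sub hQs_int (integrable_const x)]; simp
    rw [this]
    simp
  -- bias term
  have hB : (∫ ω, (Qs ω - Q) ∂μ) = (∫ ω, Qs ω ∂μ) - Q := by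
    rw [integral_sub hQs_int (integrable_const Q)]; simp
  have hbias' : ‖(∫ ω, Qs ω ∂μ) - Q‖ ≤ γ ^ 2 / 2 * s := by
    rw [← hB]
    calc ‖∫ ω, (Qs ω - Q) ∂μ‖ ≤ γ ^ 2 / 2 * ‖Q - x‖ ^ 2 := hbias
    _ = γ ^ 2 / 2 * s := by rw [hsdef, norm_sub_rev]
  have hb1 : ⟪g, (∫ ω, Qs ω ∂μ) - Q⟫ ≤ M * (γ ^ 2 / 2 * s) := by
    calc ⟪g, (∫ ω, Qs ω ∂μ) - Q⟫ ≤ ‖g‖ * ‖(∫ ω, Qs ω ∂μ) - Q‖ := real_inner_le_norm _ _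
    _ ≤ M * (γ ^ 2 / 2 * s) :=
      mul_le_mul (hgrad_bdd x hxU) hbias' (norm_nonneg _) hM.le
  -- projection variational inequality
  have hvi : ⟪(x - α • g) - Q, x - Q⟫ ≤ 0 :=
    proj_vi hC_convex hP_mem hP_min (x - α • g) hx
  have hvi' : s - α * ⟪g, x - Q⟫ ≤ 0 := by
    have he : (x - α • g) - Q = (x - Q) - α • g := by abel
    rw [he, inner_sub_left, real_inner_smul_left, real_inner_self_eq_norm_sq] at hvi
    exact hvi
  have hb2 : ⟪g, Q - x⟫ ≤ -(s * (1 / α)) := by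
    have he : Q - x = -(x - Q) := by abel
    rw [he, inner_neg_right]
    have : s * (1 / α) ≤ ⟪g, x - Q⟫ := by
      rw [mul_one_div, div_le_iff₀ hα]
      nlinarith
    linarith
  -- variance term
  have h5 : ∫ ω, ‖Qs ω - x‖ ^ 2 ∂μ ≤ (1 + ν ^ 2) * s := by
    have h51 : ∫ ω, ‖Qs ω - x‖ ^ 2 ∂μ = α ^ 2 * ∫ ω, ‖α⁻¹ • (x - Qs ω)‖ ^ 2 ∂μ := by
      rw [hfun, integral_const_mul]
    rw [h51]
    calc α ^ 2 * ∫ ω, ‖α⁻¹ • (x - Qs ω)‖ ^ 2 ∂μ ≤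
        α ^ 2 * ((1 + ν ^ 2) * ‖α⁻¹ • (x - Q)‖ ^ 2) :=
          mul_le_mul_of_nonneg_left hnorm (by positivity)
    _ = (1 + ν ^ 2) * s := by rw [hsmul]; field_simp; try ring
  -- step-size bound
  have hK : M * γ ^ 2 + L * (1 + ν ^ 2) ≤ 1 / α := by
    have hKpos : 0 < M * γ ^ 2 + L * (1 + ν ^ 2) := by positivity
    rw [le_div_iff₀ hα]
    rw [le_div_iff₀ hKpos] at hstep
    nlinarith
  -- combine
  have hfinal : (∫ ω, F (Qs ω) ∂μ) - F x ≤ -(s * (1 / α)) / 2 := by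
    have hsplit : ⟪g, (∫ ω, Qs ω ∂μ) - x⟫ =
        ⟪g, (∫ ω, Qs ω ∂μ) - Q⟫ + ⟪g, Q - x⟫ := by
      rw [← inner_add_right]
      congr 1
      abel
    have hI := h2.trans_eq h3
    rw [hsplit] at hI
    have hL2 : L / 2 * ∫ ω, ‖Qs ω - x‖ ^ 2 ∂μ ≤ L / 2 * ((1 + ν ^ 2) * s) :=
      mul_le_mul_of_nonneg_left h5 (by positivity)
    nlinarith [mul_le_mul_of_nonneg_left hK hs]
  rw [hsmul]
  calc (∫ ω, F (Qs ω) ∂μ) - F x ≤ -(s * (1 / α)) / 2 := hfinal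
  _ = -(α / 2) * (α⁻¹ ^ 2 * s) := by field_simp; try ring
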